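/- Fix a market with unit demand d = 1, a truthful preference profile ≻, a distinguished agent 1 with ≻_1-most-preferred object a and misreport ≻'_1, an MPS eating profile e for ≻ and an MPS eating profile e' for ≻' = (≻'_1, (≻_i)_{i≠1}). Suppose t_a ≥ τ and τ' ≥ τ. Then for every object b ∈ O with b ≠ a, μ_b(τ, e') ≥ μ_b(τ, e). -/

import Mathlib

open MeasureTheory Finset
open scoped Classical

/-- The amount of probability of objects in `S` consumed up to time `t`
under the eating profile `e`:  `μ_S(t,e) = ∫_0^t |{i : e_i(s) ∈ S}| ds`. -/
noncomputable def eatenAmt {N O : Type*} [Fintype N]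
    (e : N → ℝ → O) (S : Set O) (t : ℝ) : ℝ :=
  ∫ s in (0:ℝ)..t, ((Finset.univ.filter (fun i => e i s ∈ S)).card : ℝ)

/-- The final allocation of the eating profile `e`:
`μ_{ij} = ∫_0^1 1{e_i(s) = j} ds`. -/
noncomputable def finalAlloc {N O : Type*} (e : N → ℝ → O) (i : N) (j : O) : ℝ :=
  ∫ s in (0:ℝ)..1, (if e i s = j then (1:ℝ) else 0)

/-- `f` is a right-continuous step function on `[0,1)`: there is a finite set
of breakpoints, and `f` is constant on the stretches between them. -/
def RightContStep {O : Type*} (f : ℝ → O) : Prop :=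
  ∃ B : Finset ℝ, ∀ t ∈ Set.Ico (0:ℝ) 1, ∀ s ∈ Set.Ico (0:ℝ) 1,
    t ≤ s → (∀ b ∈ B, ¬ (t < b ∧ b ≤ s)) → f s = f t

/-- Object `j` satisfies the capacity condition (Cap) at `(t,e)`. -/
def CapOK {N O : Type*} [Fintype N] (c : O → ℕ)
    (e : N → ℝ → O) (j : O) (t : ℝ) : Prop :=
  eatenAmt e {j} t < c j

/-- Object `j` satisfies the global minimums condition (Global) at `(t,e)`. -/
def GlobalOK {N O : Type*} [Fintype N] [Fintype O] (m : O → ℕ)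
    (e : N → ℝ → O) (j : O) (t : ℝ) : Prop :=
  ∃ ε > 0, max (m j : ℝ) (eatenAmt e {j} t + ε) +
      ∑ k ∈ Finset.univ.erase j, max (m k : ℝ) (eatenAmt e {k} t) ≤
    (Fintype.card N : ℝ)

/-- Object `j` is available at `(t,e)`. -/
def Available {N O : Type*} [Fintype N] [Fintype O] (m c : O → ℕ)
    (e : N → ℝ → O) (j : O) (t : ℝ) : Prop :=
  CapOK c e j t ∧ GlobalOK m e j t

/-- `e` is an MPS eating profile for the strict preference profile `P`:
each `e_i` is a right-continuous step function and, at every time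
`t ∈ [0,1)`, `e_i(t)` is available and is `i`'s most preferred object among
the available ones. -/
def IsMPS {N O : Type*} [Fintype N] [Fintype O] (m c : O → ℕ)
    (P : N → O → O → Prop) (e : N → ℝ → O) : Prop :=
  (∀ i, RightContStep (e i)) ∧
  ∀ i, ∀ t ∈ Set.Ico (0:ℝ) 1,
    Available m c e (e i t) t ∧
    ∀ j, Available m c e j t → j ≠ e i t → P i (e i t) j

/-- The closing time `t_j` of object `j` under `e` (with `inf ∅ = 1`). -/
noncomputable def closeTime {N O : Type*} [Fintype N] [Fintype O] (m c : O → ℕ)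
    (e : N → ℝ → O) (j : O) : ℝ :=
  sInf ({t ∈ Set.Icc (0:ℝ) 1 | ¬ Available m c e j t} ∪ {1})

/-- The time `τ` at which the global minimums condition starts binding
under `e` (with `inf ∅ = 1`). -/
noncomputable def globalTime {N O : Type*} [Fintype N] [Fintype O] (m : O → ℕ)
    (e : N → ℝ → O) : ℝ :=
  sInf ({t ∈ Set.Icc (0:ℝ) 1 | ∃ j : O, ¬ GlobalOK m e j t} ∪ {1})

/-- `x` first-order stochastically dominates `y` for the strict preference
`Pi`. -/
def FOSD {O : Type*} [Fintype O] (Pi : O → O → Prop) (x y : O → ℝ) : Prop :=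
  ∀ o : O, ∑ j ∈ Finset.univ.filter (fun j => Pi j o ∨ j = o), y j ≤
    ∑ j ∈ Finset.univ.filter (fun j => Pi j o ∨ j = o), x j

section helpers
variable {N O : Type*} [Fintype N] [Fintype O]
set_option linter.unusedSectionVars false

def GoodB (g : N → ℝ → O) (B : Finset ℝ) : Prop :=
  ∀ i, ∀ p s : ℝ, 0 ≤ p → p ≤ s → s < 1 →
    (∀ x ∈ B, ¬ (p < x ∧ x ≤ s)) → g i s = g i p

lemma integrable_aux (g : N → ℝ → O) (B : Finset ℝ) (hg : GoodB g B) (S : Set O) :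
    ∀ k : ℕ, ∀ u t : ℝ, 0 ≤ u → u ≤ t → t ≤ 1 →
      (B.filter (fun x => u < x ∧ x < t)).card ≤ k →
      IntervalIntegrable
        (fun s => ((Finset.univ.filter (fun i => g i s ∈ S)).card : ℝ)) volume u t := by
  intro k
  induction k with
  | zero =>
    intro u t hu hut ht hcard
    have hempty : ∀ x ∈ B, ¬ (u < x ∧ x < t) := by
      intro x hx hcon
      have : x ∈ B.filter (fun x => u < x ∧ x < t) := by
        simp [Finset.mem_filter, hx, hcon.1, hcon.2]
      have := Finset.card_pos.2 ⟨x, this⟩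
      omega
    have hconst : ∀ s ∈ Set.Ioo u t,
        (fun s => ((Finset.univ.filter (fun i => g i s ∈ S)).card : ℝ)) s
        = ((Finset.univ.filter (fun i => g i u ∈ S)).card : ℝ) := by
      intro s hs
      have : ∀ i, g i s = g i u := by
        intro i
        exact hg i u s hu hs.1.le (lt_of_lt_of_le hs.2 ht)
          (fun x hx hc => hempty x hx ⟨hc.1, lt_of_le_of_lt hc.2 hs.2⟩)
      simp only [this]
    have hae : (fun s => ((Finset.univ.filter (fun i => g i s ∈ S)).card : ℝ))
        =ᵐ[volume.restrict (Set.Ioc u t)]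
        (fun _ => ((Finset.univ.filter (fun i => g i u ∈ S)).card : ℝ)) := by
      rw [Filter.EventuallyEq, ae_restrict_iff' measurableSet_Ioc]
      have : {s : ℝ | ¬ (s ∈ Set.Ioc u t →
          ((Finset.univ.filter (fun i => g i s ∈ S)).card : ℝ)
          = ((Finset.univ.filter (fun i => g i u ∈ S)).card : ℝ))} ⊆ {t} := by
        intro s hs
        simp only [Set.mem_setOf_eq, _root_.not_imp] at hs
        obtain ⟨hs1, hs2⟩ := hs
        by_contra hst
        exact hs2 (hconst s ⟨hs1.1, lt_of_le_of_ne hs1.2 hst⟩)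
      rw [ae_iff]
      exact measure_mono_null this (Real.volume_singleton)
    constructor
    · exact (integrableOn_const measure_Ioc_lt_top.ne).congr_fun_ae hae.symm
    · rw [Set.Ioc_eq_empty (by linarith)]
      exact integrableOn_empty
  | succ k ih =>
    intro u t hu hut ht hcard
    rcases Finset.eq_empty_or_nonempty (B.filter (fun x => u < x ∧ x < t)) with he | hne
    · exact ih u t hu hut ht (by rw [he]; simp)
    · set p := (B.filter (fun x => u < x ∧ x < t)).max' hne with hp
      have hpmem := (B.filter (fun x => u < x ∧ x < t)).max'_mem hne
      rw [Finset.mem_filter] at hpmem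
      have hup : u < p := hpmem.2.1
      have hpt : p < t := hpmem.2.2
      have h1 : IntervalIntegrable
          (fun s => ((Finset.univ.filter (fun i => g i s ∈ S)).card : ℝ)) volume u p := by
        apply ih u p hu hup.le (by linarith)
        have hsub : B.filter (fun x => u < x ∧ x < p) ⊆
            (B.filter (fun x => u < x ∧ x < t)).erase p := by
          intro x hx
          rw [Finset.mem_filter] at hx
          rw [Finset.mem_erase, Finset.mem_filter]
          exact ⟨ne_of_lt hx.2.2, hx.1, hx.2.1, lt_trans hx.2.2 hpt⟩
        calc (B.filter (fun x => u < x ∧ x < p)).card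
            ≤ ((B.filter (fun x => u < x ∧ x < t)).erase p).card := Finset.card_le_card hsub
          _ = (B.filter (fun x => u < x ∧ x < t)).card - 1 :=
              Finset.card_erase_of_mem ((B.filter _).max'_mem hne)
          _ ≤ k := by omega
      have h2 : IntervalIntegrable
          (fun s => ((Finset.univ.filter (fun i => g i s ∈ S)).card : ℝ)) volume p t := by
        apply ih p t (by linarith) hpt.le ht
        have : B.filter (fun x => p < x ∧ x < t) = ∅ := by
          rw [Finset.eq_empty_iff_forall_notMem]
          intro x hx
          rw [Finset.mem_filter] at hx
          have : x ∈ B.filter (fun x => u < x ∧ x < t) := by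
            rw [Finset.mem_filter]
            exact ⟨hx.1, lt_trans hup hx.2.1, hx.2.2⟩
          have := Finset.le_max' _ x this
          have := hx.2.1
          linarith
        rw [this]; simp
      exact h1.trans h2

lemma eaten_formula (g : N → ℝ → O) (B : Finset ℝ) (hg : GoodB g B) (S : Set O)
    (p t : ℝ) (hp : 0 ≤ p) (hpt : p ≤ t) (ht : t ≤ 1)
    (hB : ∀ x ∈ B, ¬ (p < x ∧ x < t)) :
    eatenAmt g S t = eatenAmt g S p
      + (t - p) * ((Finset.univ.filter (fun i => g i p ∈ S)).card : ℝ) := by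
  have h1 : IntervalIntegrable
      (fun s => ((Finset.univ.filter (fun i => g i s ∈ S)).card : ℝ)) volume 0 p := by
    apply integrable_aux g B hg S (B.filter (fun x => 0 < x ∧ x < p)).card 0 p le_rfl hp
      (by linarith) le_rfl
  have h2 : IntervalIntegrable
      (fun s => ((Finset.univ.filter (fun i => g i s ∈ S)).card : ℝ)) volume p t := by
    apply integrable_aux g B hg S 0 p t hp hpt ht
    have : B.filter (fun x => p < x ∧ x < t) = ∅ := by
      rw [Finset.eq_empty_iff_forall_notMem]
      intro x hx; rw [Finset.mem_filter] at hx; exact hB x hx.1 hx.2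
    rw [this]; simp
  have hadd := intervalIntegral.integral_add_adjacent_intervals h1 h2
  have hmid : (∫ s in p..t, ((Finset.univ.filter (fun i => g i s ∈ S)).card : ℝ))
      = (t - p) * ((Finset.univ.filter (fun i => g i p ∈ S)).card : ℝ) := by
    have hcongr : (∫ s in p..t, ((Finset.univ.filter (fun i => g i s ∈ S)).card : ℝ))
        = ∫ _ in p..t, ((Finset.univ.filter (fun i => g i p ∈ S)).card : ℝ) := by
      apply intervalIntegral.integral_congr_ae
      rw [ae_iff]
      refine measure_mono_null ?_ (Real.volume_singleton (a := t))
      · intro s hs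
        simp only [Set.mem_setOf_eq, _root_.not_imp] at hs
        obtain ⟨hs1, hs2⟩ := hs
        rw [Set.uIoc_of_le hpt] at hs1
        by_contra hst
        apply hs2
        have hconst : ∀ i, g i s = g i p := by
          intro i
          apply hg i p s hp hs1.1.le (lt_of_lt_of_le (lt_of_le_of_ne hs1.2 hst) ht)
          intro x hx hc
          exact hB x hx ⟨hc.1, lt_of_le_of_lt hc.2 (lt_of_le_of_ne hs1.2 hst)⟩
        simp only [hconst]
    rw [hcongr, intervalIntegral.integral_const, smul_eq_mul]
  unfold eatenAmt
  rw [← hadd, hmid]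
end helpers

/-- Lemma sp1: If agent `i₀`'s favorite object `a` closes no
earlier than `τ` (truthful run) and `τ' ≥ τ`, then every other object has been
consumed at least as much by time `τ` under the misreport run as under the
truthful run. -/
theorem MPS_lemma_sp1
    {N O : Type*} [Fintype N] [Fintype O] [Nonempty N] [Nonempty O]
    (m c : O → ℕ)
    (hc1 : ∀ j, 1 ≤ c j) (hc2 : ∀ j, c j ≤ Fintype.card N)
    (hfeasc : Fintype.card N ≤ ∑ j, c j)
    (hfeasm : ∑ j, m j ≤ Fintype.card N)
    (P : N → O → O → Prop) (hP : ∀ i, IsStrictTotalOrder O (P i))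
    (i₀ : N) (a : O) (ha : ∀ j : O, j ≠ a → P i₀ a j)
    (P₁' : O → O → Prop) (hP₁' : IsStrictTotalOrder O P₁')
    (P' : N → O → O → Prop)
    (hP' : P' = fun i => if i = i₀ then P₁' else P i)
    (e e' : N → ℝ → O) (he : IsMPS m c P e) (he' : IsMPS m c P' e')
    (hta : globalTime m e ≤ closeTime m c e a)
    (hτ : globalTime m e ≤ globalTime m e') :
    ∀ b : O, b ≠ a →
      eatenAmt e {b} (globalTime m e) ≤ eatenAmt e' {b} (globalTime m e) := by
  have hasymm : ∀ i : N, ∀ x y : O, P i x y → P i y x → False := by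
    intro i x y h1 h2
    haveI := hP i
    exact absurd (IsTrans.trans (r := P i) x y x h1 h2) (irrefl (r := P i) x)
  set τ := globalTime m e with hτdef
  -- bounds on τ
  have hbdd : ∀ (A : Set ℝ), A ⊆ Set.Icc (0:ℝ) 1 → BddBelow (A ∪ {1}) := by
    intro A hA
    refine ⟨0, fun x hx => ?_⟩
    rcases hx with hx | hx
    · exact (hA hx).1
    · rw [Set.mem_singleton_iff] at hx; rw [hx]; norm_num
  have hsub1 : {t ∈ Set.Icc (0:ℝ) 1 | ∃ j : O, ¬ GlobalOK m e j t} ⊆ Set.Icc (0:ℝ) 1 :=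
    fun x hx => hx.1
  have hsub2 : {t ∈ Set.Icc (0:ℝ) 1 | ∃ j : O, ¬ GlobalOK m e' j t} ⊆ Set.Icc (0:ℝ) 1 :=
    fun x hx => hx.1
  have hsub3 : {t ∈ Set.Icc (0:ℝ) 1 | ¬ Available m c e a t} ⊆ Set.Icc (0:ℝ) 1 :=
    fun x hx => hx.1
  have hτ1 : τ ≤ 1 := csInf_le (hbdd _ hsub1) (Set.mem_union_right _ rfl)
  have hτ0 : 0 ≤ τ := by
    rw [hτdef]
    unfold globalTime
    apply le_csInf ⟨1, Set.mem_union_right _ (Set.mem_singleton 1)⟩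
    intro x hx
    rcases hx with hx | hx
    · exact hx.1.1
    · rw [Set.mem_singleton_iff] at hx; rw [hx]; norm_num
  -- availability facts before τ
  have hglob_e : ∀ j : O, ∀ s : ℝ, 0 ≤ s → s < τ → GlobalOK m e j s := by
    intro j s h0 hs
    by_contra h
    have hmem : s ∈ ({t ∈ Set.Icc (0:ℝ) 1 | ∃ j : O, ¬ GlobalOK m e j t} ∪ {1}) :=
      Set.mem_union_left _ ⟨⟨h0, by linarith⟩, ⟨j, h⟩⟩
    have h2 : globalTime m e ≤ s := csInf_le (hbdd _ hsub1) hmem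
    rw [← hτdef] at h2
    linarith
  have hglob_e' : ∀ j : O, ∀ s : ℝ, 0 ≤ s → s < τ → GlobalOK m e' j s := by
    intro j s h0 hs
    by_contra h
    have hmem : s ∈ ({t ∈ Set.Icc (0:ℝ) 1 | ∃ j : O, ¬ GlobalOK m e' j t} ∪ {1}) :=
      Set.mem_union_left _ ⟨⟨h0, by linarith⟩, ⟨j, h⟩⟩
    have h2 : globalTime m e' ≤ s := csInf_le (hbdd _ hsub2) hmem
    linarith
  have havail_a : ∀ s : ℝ, 0 ≤ s → s < τ → Available m c e a s := by
    intro s h0 hs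
    by_contra h
    have hmem : s ∈ ({t ∈ Set.Icc (0:ℝ) 1 | ¬ Available m c e a t} ∪ {1}) :=
      Set.mem_union_left _ ⟨⟨h0, by linarith⟩, h⟩
    have : closeTime m c e a ≤ s := csInf_le (hbdd _ hsub3) hmem
    linarith
  obtain ⟨hstep_e, hmps_e⟩ := he
  obtain ⟨hstep_e', hmps_e'⟩ := he'
  -- agent i₀ eats a before τ
  have hia : ∀ s : ℝ, 0 ≤ s → s < τ → e i₀ s = a := by
    intro s h0 hs
    by_contra hne
    have hm := hmps_e i₀ s (Set.mem_Ico.mpr ⟨h0, by linarith⟩)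
    have h1 : P i₀ (e i₀ s) a := hm.2 a (havail_a s h0 hs) (fun h => hne h.symm)
    exact hasymm i₀ a (e i₀ s) (ha (e i₀ s) hne) h1
  -- breakpoint set
  choose Be hBe using hstep_e
  choose Be' hBe' using hstep_e'
  set B : Finset ℝ := (Finset.univ.biUnion Be) ∪ (Finset.univ.biUnion Be') with hBdef
  have hge : GoodB e B := by
    intro i p s hp hps hs1 hB
    exact hBe i p (Set.mem_Ico.mpr ⟨hp, lt_of_le_of_lt hps hs1⟩)
      s (Set.mem_Ico.mpr ⟨le_trans hp hps, hs1⟩) hps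
      (fun x hx => hB x (Finset.mem_union_left _ (Finset.mem_biUnion.2 ⟨i, Finset.mem_univ i, hx⟩)))
  have hge' : GoodB e' B := by
    intro i p s hp hps hs1 hB
    exact hBe' i p (Set.mem_Ico.mpr ⟨hp, lt_of_le_of_lt hps hs1⟩)
      s (Set.mem_Ico.mpr ⟨le_trans hp hps, hs1⟩) hps
      (fun x hx => hB x (Finset.mem_union_right _ (Finset.mem_biUnion.2 ⟨i, Finset.mem_univ i, hx⟩)))
  -- the stretch lemma
  have hstretch : ∀ p t : ℝ, 0 ≤ p → p ≤ t → t ≤ τ →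
      (∀ x ∈ B, ¬ (p < x ∧ x < t)) →
      (∀ b : O, b ≠ a → eatenAmt e {b} p ≤ eatenAmt e' {b} p) →
      (∀ b : O, b ≠ a → eatenAmt e {b} t ≤ eatenAmt e' {b} t) := by
    intro p t hp hpt htτ hB IH b hba
    rcases eq_or_lt_of_le hpt with rfl | hptlt
    · exact IH b hba
    have hpτ : p < τ := lt_of_lt_of_le hptlt htτ
    have ht1 : t ≤ 1 := le_trans htτ hτ1
    set r : ℕ := (Finset.univ.filter (fun i => e i p ∈ ({b} : Set O))).card with hr
    set r' : ℕ := (Finset.univ.filter (fun i => e' i p ∈ ({b} : Set O))).card with hr'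
    have hfe : ∀ s : ℝ, p ≤ s → s ≤ t →
        eatenAmt e {b} s = eatenAmt e {b} p + (s - p) * r := by
      intro s hs1 hs2
      exact eaten_formula e B hge {b} p s hp hs1 (le_trans hs2 ht1)
        (fun x hx hc => hB x hx ⟨hc.1, lt_of_lt_of_le hc.2 hs2⟩)
    have hfe' : ∀ s : ℝ, p ≤ s → s ≤ t →
        eatenAmt e' {b} s = eatenAmt e' {b} p + (s - p) * r' := by
      intro s hs1 hs2
      exact eaten_formula e' B hge' {b} p s hp hs1 (le_trans hs2 ht1)
        (fun x hx hc => hB x hx ⟨hc.1, lt_of_lt_of_le hc.2 hs2⟩)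
    rw [hfe t hpt le_rfl, hfe' t hpt le_rfl]
    by_cases hcap : eatenAmt e' {b} p < c b
    · -- Case A: b is still cap-available under e' at p; show r ≤ r'
      have hsub : (Finset.univ.filter (fun i => e i p ∈ ({b} : Set O))) ⊆
          (Finset.univ.filter (fun i => e' i p ∈ ({b} : Set O))) := by
        intro i hi
        simp only [Finset.mem_filter, Set.mem_singleton_iff] at hi ⊢
        refine ⟨Finset.mem_univ i, ?_⟩
        have hib : e i p = b := hi.2
        have hi0 : i ≠ i₀ := by
          rintro rfl
          rw [hia p hp hpτ] at hib
          exact hba hib.symm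
        by_contra hne'
        have hbav' : Available m c e' b p := ⟨hcap, hglob_e' b p hp hpτ⟩
        have hm' := hmps_e' i p (Set.mem_Ico.mpr ⟨hp, lt_of_lt_of_le hpτ hτ1⟩)
        have hPjb : P' i (e' i p) b := hm'.2 b hbav' (fun h => hne' h.symm)
        rw [hP'] at hPjb
        simp only [if_neg hi0] at hPjb
        have hjav' : Available m c e' (e' i p) p := hm'.1
        have hjav : Available m c e (e' i p) p := by
          by_cases hja : e' i p = a
          · rw [hja]; exact havail_a p hp hpτ
          · exact ⟨lt_of_le_of_lt (IH (e' i p) hja) hjav'.1, hglob_e (e' i p) p hp hpτ⟩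
        have hm := hmps_e i p (Set.mem_Ico.mpr ⟨hp, lt_of_lt_of_le hpτ hτ1⟩)
        have hPbj : P i (e i p) (e' i p) := hm.2 (e' i p) hjav (by rw [hib]; exact hne')
        rw [hib] at hPbj
        exact hasymm i (e' i p) b hPjb hPbj
      have hrr' : (r : ℝ) ≤ r' := Nat.cast_le.2 (Finset.card_le_card hsub)
      have := IH b hba
      nlinarith
    · -- Case B: b already at capacity under e'
      push_neg at hcap
      rcases Nat.eq_zero_or_pos r with hr0 | hrpos
      · have hr'0 : (0:ℝ) ≤ (t - p) * r' := mul_nonneg (by linarith) (Nat.cast_nonneg _)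
        have := IH b hba
        rw [hr0]
        push_cast
        linarith
      · obtain ⟨i₁, hi₁⟩ := Finset.card_pos.1 hrpos
        simp only [Finset.mem_filter, Set.mem_singleton_iff] at hi₁
        have hkey : eatenAmt e {b} p + (t - p) * r ≤ c b := by
          by_contra hgt
          push_neg at hgt
          have hrpos' : (0:ℝ) < r := by exact_mod_cast hrpos
          set δ := (eatenAmt e {b} p + (t - p) * r - c b) / r with hδ
          have hδpos : 0 < δ := div_pos (by linarith) hrpos'
          have hδr : δ * r = eatenAmt e {b} p + (t - p) * r - c b :=
            div_mul_cancel₀ _ (ne_of_gt hrpos')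
          set s := max p (t - δ) with hs
          have hps : p ≤ s := le_max_left _ _
          have hst : s < t := max_lt hptlt (by linarith)
          have hcb : (c b : ℝ) ≤ eatenAmt e {b} p + (s - p) * r := by
            rcases max_cases p (t - δ) with ⟨hseq, hle⟩ | ⟨hseq, hlt⟩
            · -- s = p, t - δ ≤ p
              rw [hs, hseq]
              have : (t - p) * r ≤ δ * r :=
                mul_le_mul_of_nonneg_right (by linarith) hrpos'.le
              simp only [sub_self, zero_mul, add_zero]
              nlinarith
            · rw [hs, hseq]
              have : (t - δ - p) * r = (t - p) * r - δ * r := by ring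
              rw [this, hδr]
              linarith
          have hconst : e i₁ s = e i₁ p := by
            rcases eq_or_lt_of_le hps with hpe | hpe
            · rw [← hpe]
            · exact hge i₁ p s hp hps (by linarith)
                (fun x hx hc => hB x hx ⟨hc.1, lt_of_le_of_lt hc.2 hst⟩)
          have hm := hmps_e i₁ s (Set.mem_Ico.mpr ⟨le_trans hp hps, by linarith⟩)
          have hav := hm.1
          rw [hconst, hi₁.2] at hav
          have hcap2 : eatenAmt e {b} s < c b := hav.1
          rw [hfe s hps hst.le] at hcap2
          linarith
        have hr'0 : (0:ℝ) ≤ (t - p) * r' := mul_nonneg (by linarith) (Nat.cast_nonneg _)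
        linarith
  -- induction over breakpoints
  have hQ0 : ∀ b : O, b ≠ a → eatenAmt e {b} 0 ≤ eatenAmt e' {b} 0 := by
    intro b _
    unfold eatenAmt
    rw [intervalIntegral.integral_same, intervalIntegral.integral_same]
  have hmain : ∀ k : ℕ, ∀ t : ℝ, 0 ≤ t → t ≤ τ →
      (B.filter (fun x => 0 < x ∧ x < t)).card < k →
      ∀ b : O, b ≠ a → eatenAmt e {b} t ≤ eatenAmt e' {b} t := by
    intro k
    induction k with
    | zero => intro t _ _ h; exact absurd h (Nat.not_lt_zero _)
    | succ k ih =>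
      intro t ht0 htτ hcard
      rcases Finset.eq_empty_or_nonempty (B.filter (fun x => 0 < x ∧ x < t)) with hemp | hne
      · refine hstretch 0 t le_rfl ht0 htτ ?_ hQ0
        intro x hx hc
        rw [Finset.eq_empty_iff_forall_notMem] at hemp
        exact hemp x (Finset.mem_filter.2 ⟨hx, hc⟩)
      · set p := (B.filter (fun x => 0 < x ∧ x < t)).max' hne with hpdef
        have hpmem0 : p ∈ B.filter (fun x => 0 < x ∧ x < t) :=
          (B.filter (fun x => 0 < x ∧ x < t)).max'_mem hne
        have hpmem := hpmem0
        rw [Finset.mem_filter] at hpmem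
        have hp0 : 0 < p := hpmem.2.1
        have hpt : p < t := hpmem.2.2
        have hQp : ∀ b : O, b ≠ a → eatenAmt e {b} p ≤ eatenAmt e' {b} p := by
          apply ih p hp0.le (by linarith)
          have hsub : B.filter (fun x => 0 < x ∧ x < p) ⊆
              (B.filter (fun x => 0 < x ∧ x < t)).erase p := by
            intro x hx
            rw [Finset.mem_filter] at hx
            rw [Finset.mem_erase, Finset.mem_filter]
            exact ⟨ne_of_lt hx.2.2, hx.1, hx.2.1, lt_trans hx.2.2 hpt⟩
          have h1 := Finset.card_le_card hsub
          have h2 := Finset.card_erase_of_mem hpmem0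
          have h3 := Finset.card_pos.2 hne
          omega
        refine hstretch p t hp0.le hpt.le htτ ?_ hQp
        intro x hx hc
        have hxm : x ∈ B.filter (fun x => 0 < x ∧ x < t) :=
          Finset.mem_filter.2 ⟨hx, lt_trans hp0 hc.1, hc.2⟩
        have hxle : x ≤ p := Finset.le_max' _ x hxm
        have := hc.1
        linarith
  exact fun b hb => hmain ((B.filter (fun x => 0 < x ∧ x < τ)).card + 1) τ hτ0 le_rfl
    (Nat.lt_succ_self _) b hb
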